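/- Let λ, μ, ν, ρ be real numbers with λ + ρ ≠ 0 (where all ε signs are +1,+1,−1 indefinite setting), satisfying μ = ν and 2μ² = λ² + ρ², arising as the entries of the restriction M = [[λ', μ'],[ν', ρ']] (suitably normalized) of ad_{v₂} to the unimodular kernel. If additionally M is required to be a symmetric 2×2 matrix with respect to an indefinite plane metric, then M must be conjugate by an isometry to θ·[[1,−1],[1,1]] or θ·[[1,1],[−1,1]] for some θ ≠ 0; in particular M has complex eigenvalues (1±i)θ. -/
import Mathlib


open Matrix

/-!
STATEMENT 17: Let `λ, μ, ν, ρ` be real numbers with `λ + ρ ≠ 0`, `μ = ν` and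
`2μ² = λ² + ρ²`, arising as the (suitably normalized) entries of the restriction
`M = [[λ, μ],[−ν, ρ]]` of `ad_{v₂}` to the unimodular kernel, written in an orthonormal
basis of the indefinite plane metric `η = diag(1,−1)` (so that `M` being `η`-symmetric,
`(ηM)ᵀ = ηM`, is equivalent to `μ = ν`).  Then `M` is conjugate by an `η`-isometry to
`θ·[[1,−1],[1,1]]` or `θ·[[1,1],[−1,1]]` for some `θ ≠ 0`; in particular `M` has complex
eigenvalues `(1±i)θ`, i.e. `tr M = 2θ` and `det M = 2θ²`.
-/
lemma aux_gen2 (θ mu a r : ℝ) (hr : r ≠ 0) (hr2 : r ^ 2 = 2 * θ * (mu - θ))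
    (hm : mu ^ 2 = θ ^ 2 + a ^ 2) :
    ∃ P : Matrix (Fin 2) (Fin 2) ℝ,
    Pᵀ * (!![(1:ℝ), 0; 0, -1]) * P = !![(1:ℝ), 0; 0, -1] ∧
    (!![θ+a, mu; -mu, θ-a]) * P = P * (θ • !![(1:ℝ), 1; -1, 1]) := by
  refine ⟨!![a/r, (θ-mu)/r; (θ-mu)/r, a/r], ?_, ?_⟩
  · have hT : (!![a/r, (θ-mu)/r; (θ-mu)/r, a/r] : Matrix (Fin 2) (Fin 2) ℝ)ᵀ
        = !![a/r, (θ-mu)/r; (θ-mu)/r, a/r] := by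
      ext i j; fin_cases i <;> fin_cases j <;> simp
    rw [hT]
    ext i j
    fin_cases i <;> fin_cases j <;>
      simp [Matrix.mul_apply, Fin.sum_univ_two] <;>
      field_simp <;> nlinarith [hr2, hm]
  · ext i j
    fin_cases i <;> fin_cases j <;>
      simp [Matrix.mul_apply, Fin.sum_univ_two, Matrix.smul_apply, smul_eq_mul] <;>
      field_simp <;>
      first
        | linear_combination r * hm
        | linear_combination (-r) * hm
        | linear_combination hm
        | linear_combination -hm
        | linear_combination (r^2) * hm
        | linear_combination (-(r^2)) * hm
        | ring
        | nlinarith [hm]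

lemma aux_gen1 (θ mu a r : ℝ) (hr : r ≠ 0) (hr2 : r ^ 2 = -2 * θ * (mu + θ))
    (hm : mu ^ 2 = θ ^ 2 + a ^ 2) :
    ∃ P : Matrix (Fin 2) (Fin 2) ℝ,
    Pᵀ * (!![(1:ℝ), 0; 0, -1]) * P = !![(1:ℝ), 0; 0, -1] ∧
    (!![θ+a, mu; -mu, θ-a]) * P = P * (θ • !![(1:ℝ), -1; 1, 1]) := by
  refine ⟨!![a/r, -(θ+mu)/r; -(θ+mu)/r, a/r], ?_, ?_⟩
  · have hT : (!![a/r, -(θ+mu)/r; -(θ+mu)/r, a/r] : Matrix (Fin 2) (Fin 2) ℝ)ᵀ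
        = !![a/r, -(θ+mu)/r; -(θ+mu)/r, a/r] := by
      ext i j; fin_cases i <;> fin_cases j <;> simp
    rw [hT]
    ext i j
    fin_cases i <;> fin_cases j <;>
      simp [Matrix.mul_apply, Fin.sum_univ_two] <;>
      field_simp <;> nlinarith [hr2, hm]
  · ext i j
    fin_cases i <;> fin_cases j <;>
      simp [Matrix.mul_apply, Fin.sum_univ_two, Matrix.smul_apply, smul_eq_mul] <;>
      field_simp <;>
      first
        | linear_combination r * hm
        | linear_combination (-r) * hm
        | linear_combination hm
        | linear_combination -hm
        | linear_combination (r^2) * hm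
        | linear_combination (-(r^2)) * hm
        | ring
        | nlinarith [hm]

theorem einstein_nonunimodular_normal_form
    (lam mu nu rho : ℝ)
    (htr : lam + rho ≠ 0)
    (hμν : mu = nu)
    (heq : 2 * mu ^ 2 = lam ^ 2 + rho ^ 2)
    (hsym : ((!![(1:ℝ), 0; 0, -1]) * (!![lam, mu; -nu, rho]))ᵀ
          = (!![(1:ℝ), 0; 0, -1]) * (!![lam, mu; -nu, rho])) :
    ∃ θ : ℝ, θ ≠ 0 ∧
      (∃ P : Matrix (Fin 2) (Fin 2) ℝ,
        Pᵀ * (!![(1:ℝ), 0; 0, -1]) * P = !![(1:ℝ), 0; 0, -1] ∧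
        ((!![lam, mu; -nu, rho]) * P = P * (θ • !![(1:ℝ), -1; 1, 1]) ∨
         (!![lam, mu; -nu, rho]) * P = P * (θ • !![(1:ℝ), 1; -1, 1]))) ∧
      Matrix.trace (!![lam, mu; -nu, rho]) = 2 * θ ∧
      Matrix.det (!![lam, mu; -nu, rho]) = 2 * θ ^ 2 := by
  subst hμν
  set θ : ℝ := (lam + rho) / 2 with hθdef
  set a : ℝ := (lam - rho) / 2 with hadef
  have hθ : θ ≠ 0 := fun h => htr (by rw [hθdef] at h; linarith)
  have hlam : lam = θ + a := by rw [hθdef, hadef]; ring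
  have hrho : rho = θ - a := by rw [hθdef, hadef]; ring
  have hm : mu ^ 2 = θ ^ 2 + a ^ 2 := by rw [hθdef, hadef]; nlinarith [heq]
  refine ⟨θ, hθ, ?_, ?_, ?_⟩
  · rw [hlam, hrho]
    rcases lt_trichotomy (θ * (mu - θ)) 0 with hc | hc | hc
    · -- θ(mu-θ) < 0 : then θ(mu+θ) ≤ 0
      rcases eq_or_lt_of_le (show θ * (mu + θ) ≤ 0 by nlinarith [sq_nonneg a, sq_nonneg θ, hm]) with hc' | hc'
      · -- μ = -θ, a = 0 : P = 1, first form
        have hmu : mu = -θ := by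
          rcases mul_eq_zero.mp hc' with h | h
          · exact absurd h hθ
          · linarith
        have ha : a = 0 := by nlinarith [hm, hmu]
        refine ⟨1, by simp, Or.inl ?_⟩
        rw [hmu, ha, mul_one, one_mul]
        ext i j
        fin_cases i <;> fin_cases j <;>
          simp [Matrix.smul_apply, smul_eq_mul] <;> ring
      · have hD : (0:ℝ) < -2 * θ * (mu + θ) := by nlinarith
        obtain ⟨P, h1, h2⟩ := aux_gen1 θ mu a (Real.sqrt (-2 * θ * (mu + θ)))
          (ne_of_gt (Real.sqrt_pos.mpr hD)) (Real.sq_sqrt hD.le) hm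
        exact ⟨P, h1, Or.inl h2⟩
    · -- θ(mu-θ) = 0 : μ = θ, a = 0 : P = 1, second form
      have hmu : mu = θ := by
        rcases mul_eq_zero.mp hc with h | h
        · exact absurd h hθ
        · linarith
      have ha : a = 0 := by nlinarith [hm, hmu]
      refine ⟨1, by simp, Or.inr ?_⟩
      rw [hmu, ha, mul_one, one_mul]
      ext i j
      fin_cases i <;> fin_cases j <;>
        simp [Matrix.smul_apply, smul_eq_mul] <;> ring
    · have hD : (0:ℝ) < 2 * θ * (mu - θ) := by nlinarith
      obtain ⟨P, h1, h2⟩ := aux_gen2 θ mu a (Real.sqrt (2 * θ * (mu - θ)))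
        (ne_of_gt (Real.sqrt_pos.mpr hD)) (Real.sq_sqrt hD.le) hm
      exact ⟨P, h1, Or.inr h2⟩
  · rw [Matrix.trace_fin_two_of, hθdef]; ring
  · rw [Matrix.det_fin_two_of, hθdef]; nlinarith [heq]
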